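/- arXiv:1611.04153 — 6 statements merged into one kernel-verified Lean document; each statement's English description precedes it below -/
import Mathlib

section
/- For the semi-implicit scheme with κ = sign(V) (the IIOE scheme in 1D), the amplification factor S(θ) = (1 - (C/2)(e^{iθ} - 1)) / (1 + (C/2)(1 - e^{-iθ})) satisfies |S(θ)| = 1 for every θ ∈ ℝ and every C ≥ 0. -/
open Complex

/-- The amplification factor of the 1D IIOE semi-implicit scheme (κ = sign V)
has modulus exactly 1 for every `θ` and every Courant number `C ≥ 0`. -/
theorem iioe_1d_amplification_modulus_one (C : ℝ) (hC : 0 ≤ C) (θ : ℝ) :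
    ‖(1 - (C : ℂ) / 2 * (Complex.exp ((θ : ℂ) * Complex.I) - 1)) /
      (1 + (C : ℂ) / 2 * (1 - Complex.exp (-(θ : ℂ) * Complex.I)))‖ = 1 := by
  set num : ℂ := 1 - (C : ℂ) / 2 * (Complex.exp ((θ : ℂ) * Complex.I) - 1) with hnum
  have hden : (1 + (C : ℂ) / 2 * (1 - Complex.exp (-(θ : ℂ) * Complex.I)))
      = (starRingEnd ℂ) num := by
    have hconjexp : Complex.exp (-(θ : ℂ) * Complex.I)
        = (starRingEnd ℂ) (Complex.exp ((θ : ℂ) * Complex.I)) := by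
      rw [← Complex.exp_conj]
      congr 1
      simp [Complex.conj_ofReal]
    rw [hnum, hconjexp]
    simp [map_sub, map_mul, map_div₀, map_one, map_ofNat, Complex.conj_ofReal]
    ring
  have hre : 1 ≤ num.re := by
    have hcos : (Complex.exp ((θ : ℂ) * Complex.I)).re = Real.cos θ := by
      simp [Complex.exp_mul_I, Complex.add_re, Complex.mul_re,
        Complex.cos_ofReal_re, Complex.sin_ofReal_im, Complex.I_re, Complex.I_im]
    simp [hnum, Complex.sub_re, Complex.mul_re, hcos]
    nlinarith [Real.cos_le_one θ, Real.neg_one_le_cos θ]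
  have hnz : num ≠ 0 := by
    intro h
    rw [h] at hre
    simp at hre
    linarith
  rw [hden, norm_div, RCLike.norm_conj, div_self (norm_ne_zero_iff.mpr hnz)]
end

section
/- For the 2D IIOE semi-implicit scheme with κ^x = sign(V), κ^y = sign(W), the amplification factor S(θ,φ) = (1 - (C/2)(e^{iθ}-1) - (D/2)(e^{iφ}-1)) / (1 + (C/2)(1-e^{-iθ}) + (D/2)(1-e^{-iφ})) satisfies |S(θ,φ)| = 1 for all θ, φ ∈ ℝ and all Courant numbers C, D ≥ 0. -/
open Complex

/-- The amplification factor of the 2D IIOE semi-implicit scheme has modulus 1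
for all `θ, φ` and all Courant numbers `C, D ≥ 0`. -/
theorem iioe_2d_amplification_modulus_one (C D : ℝ) (hC : 0 ≤ C) (hD : 0 ≤ D) (θ φ : ℝ) :
    ‖(1 - (C : ℂ) / 2 * (Complex.exp ((θ : ℂ) * Complex.I) - 1)
        - (D : ℂ) / 2 * (Complex.exp ((φ : ℂ) * Complex.I) - 1)) /
      (1 + (C : ℂ) / 2 * (1 - Complex.exp (-(θ : ℂ) * Complex.I))
        + (D : ℂ) / 2 * (1 - Complex.exp (-(φ : ℂ) * Complex.I)))‖ = 1 := by
  set N : ℂ := 1 - (C : ℂ) / 2 * (Complex.exp ((θ : ℂ) * Complex.I) - 1)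
      - (D : ℂ) / 2 * (Complex.exp ((φ : ℂ) * Complex.I) - 1) with hN
  have hre : 1 ≤ N.re := by
    have h1 : Real.cos θ ≤ 1 := Real.cos_le_one θ
    have h2 : Real.cos φ ≤ 1 := Real.cos_le_one φ
    simp only [hN, Complex.sub_re, Complex.one_re, Complex.mul_re, Complex.div_re,
      Complex.ofReal_re, Complex.ofReal_im, Complex.exp_mul_I]
    simp [Complex.cos_ofReal_re, Complex.sin_ofReal_re]
    nlinarith
  have hN0 : N ≠ 0 := by
    intro h
    rw [h] at hre
    simp at hre
    linarith
  have hconj : (1 + (C : ℂ) / 2 * (1 - Complex.exp (-(θ : ℂ) * Complex.I))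
        + (D : ℂ) / 2 * (1 - Complex.exp (-(φ : ℂ) * Complex.I))) = starRingEnd ℂ N := by
    rw [hN]
    simp only [map_sub, map_add, map_one, map_mul, map_div₀, Complex.conj_ofReal,
      Complex.conj_ofNat]
    rw [← Complex.exp_conj, ← Complex.exp_conj]
    simp [Complex.conj_ofReal]
    ring
  rw [hconj, norm_div, Complex.norm_conj,
    div_self (by simpa using hN0)]
end

section
/- The amplification factor of the 1D semi-implicit κ-scheme with κ = 0 (Fromm-type semi-implicit scheme), namely S(θ) = (1 - (C/4)(e^{iθ} - e^{-iθ})) / (1 + (C/4)(3 - 4e^{-iθ} + e^{-2iθ})), satisfies |S(θ)| ≤ 1 for all θ ∈ ℝ and all C ≥ 0. -/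
open Complex

/-- Unconditional von Neumann stability of the 1D semi-implicit κ-scheme with κ = 0. -/
theorem semi_implicit_fromm_unconditionally_stable (C : ℝ) (hC : 0 ≤ C) (θ : ℝ) :
    ‖(1 - (C : ℂ) / 4 * (Complex.exp ((θ : ℂ) * Complex.I)
          - Complex.exp (-(θ : ℂ) * Complex.I))) /
      (1 + (C : ℂ) / 4 * (3 - 4 * Complex.exp (-(θ : ℂ) * Complex.I)
          + Complex.exp (-2 * (θ : ℂ) * Complex.I)))‖ ≤ 1 := by
  rw [norm_div]
  apply div_le_one_of_le₀ _ (norm_nonneg _)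
  rw [Complex.norm_def, Complex.norm_def]
  apply Real.sqrt_le_sqrt
  have h1 : (-(θ:ℂ)) * I = ((-θ : ℝ):ℂ) * I := by push_cast; ring
  have h2 : (-2*(θ:ℂ)) * I = ((-(2*θ) : ℝ):ℂ) * I := by push_cast; ring
  have e : ∀ x : ℝ, Complex.exp ((x:ℂ)*I) = (Real.cos x : ℂ) + (Real.sin x : ℂ) * I := by
    intro x
    rw [Complex.exp_mul_I, Complex.ofReal_cos, Complex.ofReal_sin]
  rw [h1, h2, e, e, e]
  simp only [Complex.normSq_apply, Complex.add_re, Complex.add_im, Complex.sub_re, Complex.sub_im,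
    Complex.mul_re, Complex.mul_im, Complex.one_re, Complex.one_im, Complex.ofReal_re,
    Complex.ofReal_im, Complex.I_re, Complex.I_im, Complex.div_ofNat_re, Complex.div_ofNat_im,
    Complex.re_ofNat, Complex.im_ofNat, Real.cos_neg, Real.sin_neg]
  have hs := Real.sin_sq_add_cos_sq θ
  have hc2 : Real.cos (2*θ) = 2 * Real.cos θ ^ 2 - 1 := Real.cos_two_mul θ
  have hs2 : Real.sin (2*θ) = 2 * Real.sin θ * Real.cos θ := Real.sin_two_mul θ
  rw [hc2, hs2]
  ring_nf
  nlinarith [sq_nonneg ((1 - Real.cos θ)^2), sq_nonneg (Real.sin θ * (2 - Real.cos θ)), sq_nonneg (Real.sin θ), sq_nonneg (1 - Real.cos θ), mul_nonneg hC (sq_nonneg (1 - Real.cos θ)), Real.neg_one_le_cos θ, Real.cos_le_one θ, mul_nonneg (mul_nonneg hC hC) (mul_nonneg (sq_nonneg (Real.sin θ)) (mul_nonneg (sub_nonneg.2 (by nlinarith [Real.cos_le_one θ] : Real.cos θ ≤ 3)) (sub_nonneg.2 (Real.cos_le_one θ))))]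
end

section
/- The amplification factor of the fully implicit κ-scheme with constant velocity V > 0 and κ = -1, S(θ) = (1 + C(1 - e^{-iθ}) + (C/2)(1+C)(1 - 2e^{-iθ} + e^{-2iθ}))^{-1}, satisfies |S(θ)| ≤ 1 for all θ ∈ ℝ and all C ≥ 0. -/
set_option maxHeartbeats 1000000

open Complex

/-- Unconditional von Neumann stability of the fully implicit κ-scheme with κ = -1. -/
theorem implicit_beam_warming_unconditionally_stable (C : ℝ) (hC : 0 ≤ C) (θ : ℝ) :
    ‖(1 + (C : ℂ) * (1 - Complex.exp (-(θ : ℂ) * Complex.I))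
        + (C : ℂ) / 2 * (1 + (C : ℂ)) *
          (1 - 2 * Complex.exp (-(θ : ℂ) * Complex.I)
            + Complex.exp (-2 * (θ : ℂ) * Complex.I)))⁻¹‖ ≤ 1 := by
  set c : ℝ := Real.cos θ with hc
  set s : ℝ := Real.sin θ with hs
  have h1 : Complex.exp (-(θ : ℂ) * Complex.I) = (c : ℂ) - (s : ℂ) * Complex.I := by
    rw [Complex.exp_mul_I, hc, hs,
      show Complex.cos (-(θ : ℂ)) = ((Real.cos θ : ℝ) : ℂ) by
        rw [Complex.cos_neg, ← Complex.ofReal_cos],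
      show Complex.sin (-(θ : ℂ)) = -((Real.sin θ : ℝ) : ℂ) by
        rw [Complex.sin_neg, ← Complex.ofReal_sin]]
    ring
  have h2 : Complex.exp (-2 * (θ : ℂ) * Complex.I)
      = Complex.exp (-(θ : ℂ) * Complex.I) * Complex.exp (-(θ : ℂ) * Complex.I) := by
    rw [← Complex.exp_add]; ring_nf
  set Re : ℝ := 1 + C * (1 - c) + C / 2 * (1 + C) * (1 - 2 * c + c ^ 2 - s ^ 2) with hRe
  set Im : ℝ := C * s + C / 2 * (1 + C) * (2 * s - 2 * c * s) with hIm
  have hD : (1 + (C : ℂ) * (1 - Complex.exp (-(θ : ℂ) * Complex.I))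
        + (C : ℂ) / 2 * (1 + (C : ℂ)) *
          (1 - 2 * Complex.exp (-(θ : ℂ) * Complex.I)
            + Complex.exp (-2 * (θ : ℂ) * Complex.I)))
      = (Re : ℂ) + (Im : ℂ) * Complex.I := by
    rw [h2, h1, hRe, hIm]
    push_cast
    linear_combination (↑C / 2 * (1 + ↑C) * (s : ℂ) ^ 2) * Complex.I_sq
  rw [hD]
  have hsq : s ^ 2 = 1 - c ^ 2 := by
    have := Real.sin_sq_add_cos_sq θ; rw [← hc, ← hs] at this; nlinarith
  have key : Re ^ 2 + Im ^ 2 = 1 +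
      2 * C * (1 + C) * (1 + C + C * (1 + C) / 2) * (1 - c) ^ 2 := by
    rw [hRe, hIm]
    linear_combination ((C + C * (1 + C) * (1 - c)) ^ 2
      - 2 * (1 + C * (1 - c) + C / 2 * (1 + C) * (1 - c) ^ 2) * (C / 2 * (1 + C))
      + (C / 2 * (1 + C)) ^ 2 * (s ^ 2 + 1 - c ^ 2)) * hsq
  have hge : (1 : ℝ) ≤ Re ^ 2 + Im ^ 2 := by
    rw [key]
    have h2 : (0:ℝ) ≤ 1 + C := by linarith
    have h3 : (0:ℝ) ≤ 1 + C + C * (1 + C) / 2 := by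
      have := mul_nonneg hC h2; linarith
    have h4 : (0:ℝ) ≤ 2 * C * (1 + C) * (1 + C + C * (1 + C) / 2) * (1 - c) ^ 2 :=
      mul_nonneg (mul_nonneg (mul_nonneg (by linarith) h2) h3) (sq_nonneg _)
    linarith
  have hnorm : ‖(Re : ℂ) + (Im : ℂ) * Complex.I‖ ^ 2 = Re ^ 2 + Im ^ 2 := by
    rw [Complex.sq_norm, Complex.normSq_add_mul_I]
  have h1n : 1 ≤ ‖(Re : ℂ) + (Im : ℂ) * Complex.I‖ := by
    have h0 := norm_nonneg ((Re : ℂ) + (Im : ℂ) * Complex.I)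
    nlinarith [hnorm, hge, h0]
  rw [norm_inv]
  exact inv_le_one_of_one_le₀ h1n
end

section
/- For all C, D ≥ 0 and all θ, φ ∈ ℝ, the denominator of the IIOE 2D amplification factor satisfies |1 + (C/2)(1 - e^{-iθ}) + (D/2)(1 - e^{-iφ})| ≥ 1, with equality if and only if C(1-cos θ) + D(1-cos φ) = 0. -/
open Complex

/-- Key 2D stability estimate: for `C, D ≥ 0` the modulus of the implicit-part
factor is at least 1, with equality iff `C(1 - cos θ) + D(1 - cos φ) = 0`. -/
theorem implicit_denominator_ge_one (C D : ℝ) (hC : 0 ≤ C) (hD : 0 ≤ D) (θ φ : ℝ) :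
    1 ≤ ‖(1 + (C : ℂ) / 2 * (1 - Complex.exp (-(θ : ℂ) * Complex.I))
        + (D : ℂ) / 2 * (1 - Complex.exp (-(φ : ℂ) * Complex.I)))‖ ∧
    (‖(1 + (C : ℂ) / 2 * (1 - Complex.exp (-(θ : ℂ) * Complex.I))
        + (D : ℂ) / 2 * (1 - Complex.exp (-(φ : ℂ) * Complex.I)))‖ = 1
      ↔ C * (1 - Real.cos θ) + D * (1 - Real.cos φ) = 0) := by
  set z : ℂ := 1 + (C : ℂ) / 2 * (1 - Complex.exp (-(θ : ℂ) * Complex.I))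
        + (D : ℂ) / 2 * (1 - Complex.exp (-(φ : ℂ) * Complex.I)) with hz
  have hre : z.re = 1 + (C * (1 - Real.cos θ) + D * (1 - Real.cos φ)) / 2 := by
    simp [hz, Complex.exp_re, Complex.exp_im]
    ring
  have hCθ : 0 ≤ C * (1 - Real.cos θ) :=
    mul_nonneg hC (by nlinarith [Real.cos_le_one θ])
  have hDφ : 0 ≤ D * (1 - Real.cos φ) :=
    mul_nonneg hD (by nlinarith [Real.cos_le_one φ])
  have h1 : 1 ≤ ‖z‖ := by
    have := Complex.abs_re_le_norm z
    rw [hre] at this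
    have : 1 + (C * (1 - Real.cos θ) + D * (1 - Real.cos φ)) / 2 ≤ ‖z‖ := by
      refine le_trans ?_ (le_trans (le_abs_self _) this)
      linarith
    calc (1:ℝ) ≤ 1 + (C * (1 - Real.cos θ) + D * (1 - Real.cos φ)) / 2 := by linarith
    _ ≤ ‖z‖ := this
    _ = ‖z‖ := rfl
  refine ⟨h1, ?_, ?_⟩
  · intro h
    have := Complex.abs_re_le_norm z
    have habs : ‖z‖ = 1 := h
    rw [habs, hre] at this
    have h2 := le_trans (le_abs_self _) this
    linarith
  · intro h
    have hC0 : C * (1 - Real.cos θ) = 0 := by linarith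
    have hD0 : D * (1 - Real.cos φ) = 0 := by linarith
    have hCs : C * Real.sin θ = 0 := by
      rcases mul_eq_zero.mp hC0 with h' | h'
      · simp [h']
      · have : Real.cos θ = 1 := by linarith
        have := Real.sin_eq_zero_iff_cos_eq.mpr (Or.inl this)
        simp [this]
    have hDs : D * Real.sin φ = 0 := by
      rcases mul_eq_zero.mp hD0 with h' | h'
      · simp [h']
      · have : Real.cos φ = 1 := by linarith
        have := Real.sin_eq_zero_iff_cos_eq.mpr (Or.inl this)
        simp [this]
    have hz1 : z = 1 := by
      apply Complex.ext
      · rw [hre]; simp [hC0, hD0]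
      · simp [hz, Complex.exp_re, Complex.exp_im]
        nlinarith [hCs, hDs]
    rw [hz1]; simp
end

section
/- Let p(x) = ax² + bx + c be any quadratic polynomial and consider the exact advection solution u(x,t) = p(x - Vt) with constant V. Then u satisfies the 1D semi-implicit κ-scheme exactly for every κ, h > 0 and τ > 0: substituting U_i^n = p(x_i - Vt^n) into the scheme U_i^{n+1} + C(U_i^{n+1} - U_{i-1}^{n+1}) - (C/2)D^κ U_{i-1}^{n+1} · h·(1/h) = U_i^n - (C/2)·h·D^κ U_i^n (with C = τV/h > 0, hD^κU_j = ((1-κ)(U_j - U_{j-1}) + (1+κ)(U_{j+1} - U_j))/2) gives an identity. -/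
/-- The 1D semi-implicit κ-scheme reproduces advected quadratic data exactly:
with `U i n = p(ih - Vnτ)` for a quadratic `p`, the scheme identity holds for
all `i, n, κ`. -/
theorem semi_implicit_exact_on_quadratics (a b c V h τ κ : ℝ)
    (hh : 0 < h) (hτ : 0 < τ) (hV : 0 < V) (C : ℝ) (hCdef : C = τ * V / h)
    (U : ℤ → ℕ → ℝ)
    (hU : ∀ (i : ℤ) (n : ℕ),
      U i n = a * ((i : ℝ) * h - V * (n : ℝ) * τ) ^ 2
        + b * ((i : ℝ) * h - V * (n : ℝ) * τ) + c)
    (i : ℤ) (n : ℕ) :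
    U i (n + 1) + C * (U i (n + 1) - U (i - 1) (n + 1))
      - (C / 2) * ((1 - κ) * (U (i - 1) (n + 1) - U (i - 2) (n + 1))
          + (1 + κ) * (U i (n + 1) - U (i - 1) (n + 1))) / 2
      = U i n - (C / 2) * ((1 - κ) * (U i n - U (i - 1) n)
          + (1 + κ) * (U (i + 1) n - U i n)) / 2 := by
  simp only [hU, hCdef]
  push_cast
  field_simp
  ring
end
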